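/- If evaluating expression e to an integer succeeds with side conditions (i.e., the CPS symbolic evaluation evalZCps e C σ holds), then the partial evaluation function yields a value: there exists z with evalZ e σ = some z, MIN ≤ z ≤ MAX provided σ is well-bounded, and C z σ holds. -/

import Mathlib

set_option autoImplicit true

def MIN : Int := -2147483648
def MAX : Int := 2147483647

abbrev Store := String → Option Int

def Store.update (x : String) (v : Option Int) (σ : Store) : Store :=
  fun y => if x = y then v else σ y

def emptyStore : Store := fun _ => none

def WellBounded (σ : Store) : Prop := ∀ x z, σ x = some z → MIN ≤ z ∧ z ≤ MAX

def inBounds (z : Int) : Prop := MIN ≤ z ∧ z ≤ MAX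

instance : DecidablePred inBounds := fun z => by unfold inBounds; infer_instance

inductive Expr where
  | tt | ff
  | lit (z : Int)
  | var (x : String)
  | add (e₁ e₂ : Expr)
  | sub (e₁ e₂ : Expr)
  | div (e₁ e₂ : Expr)
  | lt (e₁ e₂ : Expr)
  | le (e₁ e₂ : Expr)
  | eq (e₁ e₂ : Expr)
  | ne (e₁ e₂ : Expr)

def evalZ : Expr → Store → Option Int
  | .lit z, _ => if inBounds z then some z else none
  | .var x, σ => σ x
  | .add e₁ e₂, σ =>
      match evalZ e₁ σ, evalZ e₂ σ with
      | some z₁, some z₂ => if inBounds (z₁ + z₂) then some (z₁ + z₂) else none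
      | _, _ => none
  | .sub e₁ e₂, σ =>
      match evalZ e₁ σ, evalZ e₂ σ with
      | some z₁, some z₂ => if inBounds (z₁ - z₂) then some (z₁ - z₂) else none
      | _, _ => none
  | .div e₁ e₂, σ =>
      match evalZ e₁ σ, evalZ e₂ σ with
      | some z₁, some z₂ =>
          if z₂ ≠ 0 ∧ ¬(z₁ = MIN ∧ z₂ = -1) then some (Int.tdiv z₁ z₂) else none
      | _, _ => none
  | _, _ => none

def evalBool : Expr → Store → Option Bool
  | .tt, _ => some true
  | .ff, _ => some false
  | .lt e₁ e₂, σ =>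
      match evalZ e₁ σ, evalZ e₂ σ with
      | some z₁, some z₂ => some (decide (z₁ < z₂))
      | _, _ => none
  | .le e₁ e₂, σ =>
      match evalZ e₁ σ, evalZ e₂ σ with
      | some z₁, some z₂ => some (decide (z₁ ≤ z₂))
      | _, _ => none
  | .eq e₁ e₂, σ =>
      match evalZ e₁ σ, evalZ e₂ σ with
      | some z₁, some z₂ => some (decide (z₁ = z₂))
      | _, _ => none
  | .ne e₁ e₂, σ =>
      match evalZ e₁ σ, evalZ e₂ σ with
      | some z₁, some z₂ => some (decide (z₁ ≠ z₂))
      | _, _ => none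
  | _, _ => none

abbrev SCont := Store → Prop

def evalZCps : Expr → (Int → SCont) → SCont
  | .lit z, C, σ => if inBounds z then C z σ else False
  | .var x, C, σ =>
      match σ x with
      | some z => C z σ
      | none => False
  | .add e₁ e₂, C, σ =>
      evalZCps e₁ (fun z₁ σ => evalZCps e₂ (fun z₂ σ =>
        MIN ≤ z₁ + z₂ ∧ ((z₁ + z₂ ≤ MAX) ∧ C (z₁ + z₂) σ)) σ) σ
  | .sub e₁ e₂, C, σ =>
      evalZCps e₁ (fun z₁ σ => evalZCps e₂ (fun z₂ σ =>
        MIN ≤ z₁ - z₂ ∧ ((z₁ - z₂ ≤ MAX) ∧ C (z₁ - z₂) σ)) σ) σ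
  | .div e₁ e₂, C, σ =>
      evalZCps e₁ (fun z₁ σ => evalZCps e₂ (fun z₂ σ =>
        z₂ ≠ 0 ∧ ((¬(z₁ = MIN ∧ z₂ = -1)) ∧ C (Int.tdiv z₁ z₂) σ)) σ) σ
  | _, _, _ => False

lemma div_bounds {z₁ z₂ : Int} (h1 : MIN ≤ z₁) (h2 : z₁ ≤ MAX)
    (hz : z₂ ≠ 0) (hn : ¬(z₁ = MIN ∧ z₂ = -1)) :
    MIN ≤ Int.tdiv z₁ z₂ ∧ Int.tdiv z₁ z₂ ≤ MAX := by
  unfold MIN MAX at *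
  rw [show Int.tdiv z₁ z₂ = Int.tdiv z₁ z₂ from rfl]
  rcases eq_or_ne z₂ 1 with rfl | h1'
  · simp [Int.tdiv_one]; omega
  rcases eq_or_ne z₂ (-1) with rfl | h2'
  · have : Int.tdiv z₁ (-1) = -z₁ := by
      rw [show (-1 : Int) = -(1:Int) from rfl, Int.tdiv_neg, Int.tdiv_one]
    rw [this]; omega
  · have hab : z₂.natAbs ≥ 2 := by omega
    have hd : (z₁.tdiv z₂).natAbs = z₁.natAbs / z₂.natAbs := Int.natAbs_tdiv z₁ z₂
    have hle : z₁.natAbs / z₂.natAbs ≤ z₁.natAbs / 2 :=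
      Nat.div_le_div_left hab (by norm_num)
    have hle2 : z₁.natAbs / 2 ≤ 1073741824 := by omega
    have key : (z₁.tdiv z₂).natAbs ≤ 1073741824 := by
      rw [hd]; omega
    omega

theorem evalZCps_evalZ {e : Expr} {C : Int → SCont} {σ : Store}
    (hwb : WellBounded σ) (h : evalZCps e C σ) :
    ∃ z, evalZ e σ = some z ∧ (MIN ≤ z ∧ z ≤ MAX) ∧ C z σ := by
  induction e generalizing C with
  | lit z =>
      unfold evalZCps at h
      split at h
      · exact ⟨z, by simp [evalZ, *], by unfold inBounds at *; tauto, h⟩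
      · exact absurd h id
  | var x =>
      unfold evalZCps at h
      rcases hx : σ x with _ | z
      · rw [hx] at h; exact absurd h id
      · rw [hx] at h
        exact ⟨z, by simp [evalZ, hx], hwb x z hx, h⟩
  | add e₁ e₂ ih₁ ih₂ =>
      unfold evalZCps at h
      obtain ⟨z₁, hz₁, hb₁, h₁⟩ := ih₁ h
      obtain ⟨z₂, hz₂, hb₂, h₂⟩ := ih₂ h₁
      refine ⟨z₁ + z₂, ?_, ⟨h₂.1, h₂.2.1⟩, h₂.2.2⟩
      simp [evalZ, hz₁, hz₂, inBounds, h₂.1, h₂.2.1]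
  | sub e₁ e₂ ih₁ ih₂ =>
      unfold evalZCps at h
      obtain ⟨z₁, hz₁, hb₁, h₁⟩ := ih₁ h
      obtain ⟨z₂, hz₂, hb₂, h₂⟩ := ih₂ h₁
      refine ⟨z₁ - z₂, ?_, ⟨h₂.1, h₂.2.1⟩, h₂.2.2⟩
      simp [evalZ, hz₁, hz₂, inBounds, h₂.1, h₂.2.1]
  | div e₁ e₂ ih₁ ih₂ =>
      unfold evalZCps at h
      obtain ⟨z₁, hz₁, hb₁, h₁⟩ := ih₁ h
      obtain ⟨z₂, hz₂, hb₂, h₂⟩ := ih₂ h₁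
      refine ⟨Int.tdiv z₁ z₂, ?_, div_bounds hb₁.1 hb₁.2 h₂.1 h₂.2.1, h₂.2.2⟩
      simp [evalZ, hz₁, hz₂, h₂.1, h₂.2.1]
  | tt => exact absurd h id
  | ff => exact absurd h id
  | lt e₁ e₂ => exact absurd h id
  | le e₁ e₂ => exact absurd h id
  | eq e₁ e₂ => exact absurd h id
  | ne e₁ e₂ => exact absurd h id
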